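/- arXiv:2604.25761 — 2 statements merged into one kernel-verified Lean document; each statement's English description precedes it below -/
import Mathlib

section
/- Let (T,Σ,ν) be a superatomless probability space and let μ be a probability measure on (T,Σ) that is absolutely continuous with respect to ν. Then μ is superatomless. -/
open MeasureTheory Set Filter
open scoped ENNReal NNReal

/-- A measure space is superatomless if the subspace `L₁(A,ν)` of `L₁(ν)` of elements
vanishing outside `A` is non-separable for every measurable `A` with `ν A > 0`. -/
def Superatomless {T : Type*} [MeasurableSpace T] (ν : Measure T) : Prop :=
  ∀ A : Set T, MeasurableSet A → 0 < ν A →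
    ¬ TopologicalSpace.IsSeparable {f : Lp ℝ 1 ν | ∀ᵐ t ∂ν, t ∉ A → f t = 0}

section Aux

variable {T : Type*} [MeasurableSpace T] {ν : Measure T} {g : T → ℝ≥0∞}

/-- Pointwise identity for the enorm of a product with a density. -/
lemma aux_nnnorm_mul_toReal {f : T → ℝ} {t : T} (ht : g t ≠ ∞) :
    (‖f t * (g t).toReal‖₊ : ℝ≥0∞) = g t * ‖f t‖₊ := by
  rw [nnnorm_mul, ENNReal.coe_mul, ← enorm_eq_nnnorm ((g t).toReal), Real.enorm_eq_ofReal ENNReal.toReal_nonneg,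
    ENNReal.ofReal_toReal ht, mul_comm]

/-- The key L¹-seminorm identity: multiplying by the density `g` turns the
`L¹(withDensity g)`-seminorm into the `L¹(ν)`-seminorm. -/
lemma aux_eLpNorm_mul (hg : Measurable g) (hgfin : ∀ᵐ t ∂ν, g t < ∞)
    {f : T → ℝ} (hf : AEStronglyMeasurable f (ν.withDensity g)) :
    eLpNorm (fun t => f t * (g t).toReal) 1 ν = eLpNorm f 1 (ν.withDensity g) := by
  rw [eLpNorm_one_eq_lintegral_enorm, eLpNorm_one_eq_lintegral_enorm,
    lintegral_withDensity_eq_lintegral_mul₀' hg.aemeasurable hf.enorm]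
  refine lintegral_congr_ae ?_
  filter_upwards [hgfin] with t ht
  simp only [Pi.mul_apply]
  exact aux_nnnorm_mul_toReal ht.ne

/-- Multiplication by the density is a.e.-strongly measurable w.r.t. `ν`. -/
lemma aux_aestronglyMeasurable_mul (hg : Measurable g) (hgfin : ∀ᵐ t ∂ν, g t < ∞)
    {f : T → ℝ} (hf : AEStronglyMeasurable f (ν.withDensity g)) :
    AEStronglyMeasurable (fun t => f t * (g t).toReal) ν := by
  have hgn : Measurable fun t => (g t).toNNReal := hg.ennreal_toNNReal
  have hd : ν.withDensity (fun t => ((g t).toNNReal : ℝ≥0∞)) = ν.withDensity g := by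
    refine withDensity_congr_ae ?_
    filter_upwards [hgfin] with t ht
    exact ENNReal.coe_toNNReal ht.ne
  have : AEStronglyMeasurable f (ν.withDensity fun t => ((g t).toNNReal : ℝ≥0∞)) := by
    rwa [hd]
  have := (aestronglyMeasurable_withDensity_iff hgn).mp this
  simpa [smul_eq_mul, mul_comm, ENNReal.coe_toNNReal_eq_toReal] using this

/-- If two functions agree a.e. w.r.t. `withDensity g`, the products with `g.toReal`
agree a.e. w.r.t. `ν`. -/
lemma aux_mul_ae_eq (hg : Measurable g) {f₁ f₂ : T → ℝ}
    (h : f₁ =ᵐ[ν.withDensity g] f₂) :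
    (fun t => f₁ t * (g t).toReal) =ᵐ[ν] fun t => f₂ t * (g t).toReal := by
  rw [EventuallyEq, ae_withDensity_iff hg] at h
  filter_upwards [h] with t ht
  by_cases h0 : g t = 0
  · simp [h0]
  · rw [ht h0]

end Aux

/-- A probability measure absolutely continuous with respect to a superatomless
probability measure is superatomless. -/
theorem stmt5 {T : Type*} [MeasurableSpace T]
    (ν μ : Measure T) [IsProbabilityMeasure ν] [IsProbabilityMeasure μ]
    (hsa : Superatomless ν) (hac : μ ≪ ν) :
    Superatomless μ := by
  intro A hA hμA hsep
  set g : T → ℝ≥0∞ := μ.rnDeriv ν with hg_def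
  have hg : Measurable g := Measure.measurable_rnDeriv μ ν
  have hgfin : ∀ᵐ t ∂ν, g t < ∞ := Measure.rnDeriv_lt_top μ ν
  have hμeq : ν.withDensity g = μ := Measure.withDensity_rnDeriv_eq μ ν hac
  -- the set where the density is positive
  set B : Set T := A ∩ {t | 0 < g t} with hB_def
  have hB : MeasurableSet B := hA.inter (hg measurableSet_Ioi)
  have hABnull : μ (A \ B) = 0 := by
    have hsub : A \ B ⊆ {t | g t = 0} := by
      intro t ht
      simp only [hB_def, mem_diff, mem_inter_iff, not_and, mem_setOf_eq] at ht ⊢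
      have := ht.2 ht.1
      simpa [pos_iff_ne_zero] using this
    have hmeas : MeasurableSet (A \ B) := hA.diff hB
    have : μ (A \ B) = ∫⁻ t in A \ B, g t ∂ν := by
      rw [← hμeq, withDensity_apply _ hmeas]
    rw [this]
    have : ∫⁻ t in A \ B, g t ∂ν = ∫⁻ _ in A \ B, 0 ∂ν :=
      setLIntegral_congr_fun hmeas (fun t ht => hsub ht)
    simp [this]
  have hμB : 0 < μ B := by
    by_contra h
    push_neg at h
    have hB0 : μ B = 0 := le_antisymm h zero_le
    have : μ A ≤ μ (A \ B) + μ B := by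
      refine (measure_mono ?_).trans (measure_union_le _ _)
      intro t ht
      by_cases h : t ∈ B
      · exact Or.inr h
      · exact Or.inl ⟨ht, h⟩
    rw [hABnull, hB0, add_zero] at this
    exact hμA.not_ge this
  have hνB : 0 < ν B := by
    rcases eq_or_lt_of_le (zero_le : (0 : ℝ≥0∞) ≤ ν B) with h | h
    · exact absurd (hac h.symm) hμB.ne'
    · exact h
  -- the map `L¹(μ) → L¹(ν)`, `f ↦ f * g.toReal`
  have hmem : ∀ f : Lp ℝ 1 μ, MemLp (fun t => f t * (g t).toReal) 1 ν := by
    intro f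
    have hf : AEStronglyMeasurable (⇑f) (ν.withDensity g) := by
      rw [hμeq]; exact (Lp.memLp f).1
    refine ⟨aux_aestronglyMeasurable_mul hg hgfin hf, ?_⟩
    rw [aux_eLpNorm_mul hg hgfin hf, hμeq]
    exact (Lp.memLp f).2
  set Φ : Lp ℝ 1 μ → Lp ℝ 1 ν := fun f => (hmem f).toLp _ with hΦ_def
  -- Φ is an isometry, hence continuous
  have hΦ_isom : Isometry Φ := by
    intro f f'
    rw [edist_dist, edist_dist, Lp.dist_def, Lp.dist_def]
    congr 1
    have h1 : ⇑(Φ f) - ⇑(Φ f') =ᵐ[ν]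
        fun t => (f t - f' t) * (g t).toReal := by
      filter_upwards [(hmem f).coeFn_toLp, (hmem f').coeFn_toLp] with t h h'
      simp only [Pi.sub_apply, hΦ_def] at *
      rw [h, h', sub_mul]
    have h2 : AEStronglyMeasurable (fun t => f t - f' t) (ν.withDensity g) := by
      rw [hμeq]; exact ((Lp.memLp f).1.sub (Lp.memLp f').1)
    rw [eLpNorm_congr_ae h1, aux_eLpNorm_mul hg hgfin h2, hμeq]
    refine congrArg _ (eLpNorm_congr_ae ?_)
    filter_upwards [Lp.coeFn_sub f f'] with t ht
    simp [ht]
  -- the image of the μ-ball set covers the ν-ball set for B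
  refine hsa B hB hνB ?_
  refine TopologicalSpace.IsSeparable.mono
    ((hsep.image hΦ_isom.continuous)) ?_
  rintro h hh
  -- construct the preimage `h * g⁻¹.toReal`
  set F : T → ℝ := fun t => h t * ((g t)⁻¹).toReal with hF_def
  have hFmeasν : AEStronglyMeasurable F ν :=
    (Lp.memLp h).1.mul (hg.inv.ennreal_toReal.aestronglyMeasurable)
  have hFmeasμ : AEStronglyMeasurable F (ν.withDensity g) := by
    rw [hμeq]; exact hFmeasν.mono_ac hac
  -- F * g = h a.e. ν
  have hcancel : (fun t => F t * (g t).toReal) =ᵐ[ν] ⇑h := by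
    filter_upwards [hgfin, hh] with t htfin hth
    simp only [hF_def]
    by_cases h0 : g t = 0
    · have htB : t ∉ B := by
        simp [hB_def, h0]
      simp [hth htB, h0]
    · rw [mul_assoc, ← ENNReal.toReal_mul, ENNReal.inv_mul_cancel h0 htfin.ne,
        ENNReal.toReal_one, mul_one]
  have hFmem : MemLp F 1 μ := by
    rw [← hμeq]
    refine ⟨hFmeasμ, ?_⟩
    rw [← aux_eLpNorm_mul hg hgfin hFmeasμ, eLpNorm_congr_ae hcancel]
    exact (Lp.memLp h).2
  set f : Lp ℝ 1 μ := hFmem.toLp F with hf_def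
  refine ⟨f, ?_, ?_⟩
  · -- f vanishes outside A, μ-a.e.
    have hν_van : ∀ᵐ t ∂ν, t ∉ A → F t = 0 := by
      filter_upwards [hh] with t ht htA
      have : t ∉ B := fun hB' => htA hB'.1
      simp [hF_def, ht this]
    have hμ_van : ∀ᵐ t ∂μ, t ∉ A → F t = 0 := hac.ae_le hν_van
    have hcoe : ⇑f =ᵐ[μ] F := hFmem.coeFn_toLp
    filter_upwards [hμ_van, hcoe] with t ht htc htA
    rw [htc]; exact ht htA
  · -- Φ f = h
    refine Lp.ext ?_
    have hcoe : ⇑f =ᵐ[ν.withDensity g] F := by rw [hμeq]; exact hFmem.coeFn_toLp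
    have h1 : ⇑(Φ f) =ᵐ[ν] fun t => f t * (g t).toReal := (hmem f).coeFn_toLp
    have h2 : (fun t => f t * (g t).toReal) =ᵐ[ν] fun t => F t * (g t).toReal :=
      aux_mul_ae_eq hg hcoe
    exact h1.trans (h2.trans hcancel)
end

section
/- Let μ be a distributional economy such that μ(𝒫_mo × E) = 1 and ∫π_E dμ ≫ 0, and let ν be a core reallocation for μ. Then there exists a price vector p ∈ ℝ^l with p ≫ 0 such that ν({(≻,e,x) : p·x = p·e}) = 1. -/
open MeasureTheory Set

noncomputable section

/-- The consumption set `X = E = ℝ^l₊`, the nonnegative orthant of `ℝ^l`. -/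
abbrev Cons (l : ℕ) := {x : Fin l → ℝ // ∀ i, 0 ≤ x i}

/-- The space `𝒫` of irreflexive binary relations on `X` with (relatively) open graph. -/
structure PrefRel (l : ℕ) where
  rel : Cons l → Cons l → Prop
  irrefl : Irreflexive rel
  openGraph : IsOpen {p : Cons l × Cons l | rel p.1 p.2}

/-- The coarsest topology on `𝒫` making `{(≻,x,y) | x ≻ y}` open in `𝒫 × X × X`. -/
instance (l : ℕ) : TopologicalSpace (PrefRel l) :=
  sSup {t : TopologicalSpace (PrefRel l) |
    @IsOpen (PrefRel l × Cons l × Cons l)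
      (@instTopologicalSpaceProd (PrefRel l) (Cons l × Cons l) t inferInstance)
      {p | p.1.rel p.2.1 p.2.2}}

/-- `𝒫` carries the Borel σ-algebra of this topology. -/
instance (l : ℕ) : MeasurableSpace (PrefRel l) := borel (PrefRel l)

instance (l : ℕ) : BorelSpace (PrefRel l) := ⟨rfl⟩

/-- Strictly monotone preferences (membership in `𝒫_mo`): `x > y` coordinatewise
(with `x ≠ y`) implies `x ≻ y`. -/
def IsMono {l : ℕ} (r : PrefRel l) : Prop :=
  ∀ x y : Cons l, (∀ i, y.1 i ≤ x.1 i) → x ≠ y → r.rel x y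

/-- `τ` is a reallocation for the distributional economy `μ`: a Borel probability measure
on `𝒫 × E × X` whose `𝒫 × E`-marginal is `μ` and whose `𝒫 × X`-marginal is a
distributional allocation for `μ`. -/
def Realloc {l : ℕ} (μ : Measure (PrefRel l × Cons l))
    (τ : Measure (PrefRel l × Cons l × Cons l)) : Prop :=
  IsProbabilityMeasure τ ∧
    τ.map (fun q => (q.1, q.2.1)) = μ ∧
    Integrable (fun q : PrefRel l × Cons l × Cons l => (q.2.2).1) τ ∧
    ∫ q : PrefRel l × Cons l × Cons l, (q.2.2).1 ∂τ =
      ∫ p : PrefRel l × Cons l, (p.2).1 ∂μ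

/-- `τ` is a Walrasian reallocation: for some price vector `p`, `τ`-almost every
`(≻, e, x)` satisfies `p · x ≤ p · e` and `x' ≻ x → p · x' > p · e`. -/
def Walrasian {l : ℕ} (τ : Measure (PrefRel l × Cons l × Cons l)) : Prop :=
  ∃ p : Fin l → ℝ,
    τ {q : PrefRel l × Cons l × Cons l |
      (∑ i, p i * (q.2.2).1 i) ≤ (∑ i, p i * (q.2.1).1 i) ∧
      ∀ x' : Cons l, q.1.rel x' q.2.2 → (∑ i, p i * (q.2.1).1 i) < ∑ i, p i * x'.1 i} = 1

/-- `τ` is a core reallocation: there is no (nonzero) Borel measure `κ` on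
`𝒫 × E × X × X'` under which `{(≻,e,x,x') | ¬ x' ≻ x}` is null, whose `𝒫 × E × X`-marginal
is setwise smaller than `τ`, and with `∫ π_{X'} dκ = ∫ π_E dκ`. -/
def CoreRealloc {l : ℕ} (τ : Measure (PrefRel l × Cons l × Cons l)) : Prop :=
  ¬ ∃ κ : Measure (PrefRel l × Cons l × Cons l × Cons l),
      κ ≠ 0 ∧
      κ {q : PrefRel l × Cons l × Cons l × Cons l | ¬ q.1.rel q.2.2.2 q.2.2.1} = 0 ∧
      (∀ A : Set (PrefRel l × Cons l × Cons l), MeasurableSet A →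
        κ.map (fun q => (q.1, q.2.1, q.2.2.1)) A ≤ τ A) ∧
      Integrable (fun q : PrefRel l × Cons l × Cons l × Cons l => (q.2.2.2).1) κ ∧
      Integrable (fun q : PrefRel l × Cons l × Cons l × Cons l => (q.2.1).1) κ ∧
      ∫ q : PrefRel l × Cons l × Cons l × Cons l, (q.2.2.2).1 ∂κ =
        ∫ q : PrefRel l × Cons l × Cons l × Cons l, (q.2.1).1 ∂κ


namespace Core17

variable {l : ℕ}

instance (l : ℕ) : BorelSpace (Cons l) := Subtype.borelSpace {x : Fin l → ℝ | ∀ i, 0 ≤ x i}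

lemma isClosed_nonneg (l : ℕ) : IsClosed {x : Fin l → ℝ | ∀ i, 0 ≤ x i} := by
  have : {x : Fin l → ℝ | ∀ i, 0 ≤ x i} = ⋂ i, {x | 0 ≤ x i} := by
    ext x; simp
  rw [this]
  exact isClosed_iInter fun i => isClosed_le continuous_const (continuous_apply i)

instance : LocallyCompactSpace (Cons l) :=
  (Topology.IsClosedEmbedding.subtypeVal (isClosed_nonneg l)).locallyCompactSpace

/-- For compact `K`, the set of preferences whose graph contains `K` is open. -/
lemma isOpen_setOf_subset {K : Set (Cons l × Cons l)} (hK : IsCompact K) :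
    IsOpen {r : PrefRel l | ∀ z ∈ K, r.rel z.1 z.2} := by
  show @IsOpen _ (sSup {t : TopologicalSpace (PrefRel l) |
    @IsOpen (PrefRel l × Cons l × Cons l)
      (@instTopologicalSpaceProd (PrefRel l) (Cons l × Cons l) t inferInstance)
      {p | p.1.rel p.2.1 p.2.2}}) {r : PrefRel l | ∀ z ∈ K, r.rel z.1 z.2}
  rw [isOpen_sSup_iff]
  intro t ht
  refine (@isOpen_iff_forall_mem_open (PrefRel l) t _).mpr ?_
  intro r hr
  have hsub : ({r} : Set (PrefRel l)) ×ˢ K ⊆ {p : PrefRel l × Cons l × Cons l | p.1.rel p.2.1 p.2.2} := by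
    rintro ⟨r', z⟩ ⟨hr', hz⟩
    simp only [mem_singleton_iff] at hr'
    subst hr'
    exact hr z hz
  obtain ⟨u, v, huo, hvo, hru, hKv, huv⟩ :=
    @generalized_tube_lemma (PrefRel l) (Cons l × Cons l) t _ {r}
      (@isCompact_singleton _ t r) K hK _ ht hsub
  refine ⟨u, ?_, huo, hru rfl⟩
  intro r' hr' z hz
  exact huv (Set.mk_mem_prod hr' (hKv hz))

/-- The graph set is open in the product topology. -/
lemma isOpen_relSet (l : ℕ) :
    IsOpen {p : PrefRel l × Cons l × Cons l | p.1.rel p.2.1 p.2.2} := by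
  rw [isOpen_iff_forall_mem_open]
  rintro ⟨r, z⟩ hz
  obtain ⟨K, hK, hzK, hKsub⟩ := exists_compact_subset r.openGraph hz
  refine ⟨{r' : PrefRel l | ∀ w ∈ K, r'.rel w.1 w.2} ×ˢ interior K, ?_, ?_, ?_⟩
  · rintro ⟨r', w⟩ ⟨hr', hw⟩
    exact hr' w (interior_subset hw)
  · exact (isOpen_setOf_subset hK).prod isOpen_interior
  · exact ⟨fun w hw => hKsub hw, hzK⟩

lemma measurableSet_relSet (l : ℕ) :
    MeasurableSet {p : PrefRel l × Cons l × Cons l | p.1.rel p.2.1 p.2.2} :=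
  (isOpen_relSet l).measurableSet

end Core17
namespace Core17

/-- Compact exhaustion pieces of `{(x,y) | y ≤ x, x ≠ y}`. -/
def KSet (l n : ℕ) : Set (Cons l × Cons l) :=
  {z | (∀ i, z.2.1 i ≤ z.1.1 i) ∧ (∀ i, z.1.1 i ≤ n) ∧
    (1 : ℝ)/(n+1) ≤ ∑ i, (z.1.1 i - z.2.1 i)}

lemma isCompact_KSet (l n : ℕ) : IsCompact (KSet l n) := by
  have hemb : Topology.IsEmbedding
      (fun z : Cons l × Cons l => (z.1.1, z.2.1) : Cons l × Cons l → (Fin l → ℝ) × (Fin l → ℝ)) :=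
    Topology.IsEmbedding.prodMap Topology.IsEmbedding.subtypeVal Topology.IsEmbedding.subtypeVal
  rw [hemb.isCompact_iff]
  have himg : (fun z : Cons l × Cons l => (z.1.1, z.2.1)) '' KSet l n =
      {w : (Fin l → ℝ) × (Fin l → ℝ) | ∀ i, 0 ≤ w.2 i} ∩
      ({w : (Fin l → ℝ) × (Fin l → ℝ) | ∀ i, w.2 i ≤ w.1 i} ∩
      ({w : (Fin l → ℝ) × (Fin l → ℝ) | ∀ i, w.1 i ≤ n} ∩
       {w : (Fin l → ℝ) × (Fin l → ℝ) | (1 : ℝ)/(n+1) ≤ ∑ i, (w.1 i - w.2 i)})) := by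
    ext w
    constructor
    · rintro ⟨z, ⟨h1, h2, h3⟩, rfl⟩
      exact ⟨fun i => z.2.2 i, h1, h2, h3⟩
    · rintro ⟨h0, h1, h2, h3⟩
      exact ⟨(⟨w.1, fun i => le_trans (h0 i) (h1 i)⟩, ⟨w.2, h0⟩), ⟨h1, h2, h3⟩, rfl⟩
  rw [himg]
  apply IsCompact.of_isClosed_subset
    ((isCompact_Icc (a := (0 : Fin l → ℝ)) (b := fun _ => (n : ℝ))).prod
      (isCompact_Icc (a := (0 : Fin l → ℝ)) (b := fun _ => (n : ℝ))))
  · refine IsClosed.inter ?_ (IsClosed.inter ?_ (IsClosed.inter ?_ ?_))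
    · rw [Set.setOf_forall]
      exact isClosed_iInter fun i =>
        isClosed_le continuous_const ((continuous_apply i).comp continuous_snd)
    · rw [Set.setOf_forall]
      exact isClosed_iInter fun i =>
        isClosed_le ((continuous_apply i).comp continuous_snd)
          ((continuous_apply i).comp continuous_fst)
    · rw [Set.setOf_forall]
      exact isClosed_iInter fun i =>
        isClosed_le ((continuous_apply i).comp continuous_fst) continuous_const
    · exact isClosed_le continuous_const (continuous_finset_sum _ fun i _ =>
        ((continuous_apply i).comp continuous_fst).sub ((continuous_apply i).comp continuous_snd))
  · rintro w ⟨h0, h1, h2, _⟩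
    constructor
    · refine ⟨fun i => le_trans (h0 i) (h1 i), fun i => h2 i⟩
    · exact ⟨h0, fun i => le_trans (h1 i) (h2 i)⟩

lemma isMono_iff_forall_KSet {l : ℕ} (r : PrefRel l) :
    IsMono r ↔ ∀ n : ℕ, ∀ z ∈ KSet l n, r.rel z.1 z.2 := by
  constructor
  · rintro hmono n ⟨x, y⟩ ⟨h1, _, h3⟩
    refine hmono x y h1 fun hxy => ?_
    rw [hxy] at h3
    simp only [sub_self, Finset.sum_const_zero] at h3
    have : (0 : ℝ) < 1/(n+1) := by positivity
    linarith
  · intro hr x y hle hne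
    have hxyv : x.1 ≠ y.1 := fun h => hne (Subtype.ext h)
    obtain ⟨i₀, hi₀⟩ := Function.ne_iff.mp hxyv
    have hs : 0 < ∑ i, (x.1 i - y.1 i) := by
      refine Finset.sum_pos' (fun i _ => by linarith [hle i]) ⟨i₀, Finset.mem_univ _, ?_⟩
      have := hle i₀
      cases lt_or_eq_of_le this with
      | inl h => linarith
      | inr h => exact absurd h.symm hi₀
    obtain ⟨n1, hn1⟩ := exists_nat_ge ‖x.1‖
    obtain ⟨n2, hn2⟩ := exists_nat_ge (1 / ∑ i, (x.1 i - y.1 i))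
    refine hr (max n1 n2) (x, y) ⟨hle, fun i => ?_, ?_⟩
    · calc x.1 i ≤ |x.1 i| := le_abs_self _
        _ ≤ ‖x.1‖ := by simpa using norm_le_pi_norm x.1 i
        _ ≤ n1 := hn1
        _ ≤ (max n1 n2 : ℕ) := by exact_mod_cast Nat.cast_le.mpr (le_max_left _ _)
    · have hle2 : (1 : ℝ) / ∑ i, (x.1 i - y.1 i) ≤ (max n1 n2 : ℕ) + 1 := by
        calc (1 : ℝ) / ∑ i, (x.1 i - y.1 i) ≤ n2 := hn2
          _ ≤ (max n1 n2 : ℕ) := by exact_mod_cast Nat.cast_le.mpr (le_max_right _ _)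
          _ ≤ (max n1 n2 : ℕ) + 1 := by linarith
      exact (one_div_le (by positivity) hs).mpr hle2

lemma measurableSet_isMono (l : ℕ) : MeasurableSet {r : PrefRel l | IsMono r} := by
  have : {r : PrefRel l | IsMono r} = ⋂ n : ℕ, {r | ∀ z ∈ KSet l n, r.rel z.1 z.2} := by
    ext r
    simp only [Set.mem_setOf_eq, Set.mem_iInter]
    exact isMono_iff_forall_KSet r
  rw [this]
  exact MeasurableSet.iInter fun n => (isOpen_setOf_subset (isCompact_KSet l n)).measurableSet

end Core17
namespace Core17

open scoped ENNReal NNReal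

variable {l : ℕ}

/-- measurability of the coordinate functions -/
lemma meas_eF : Measurable (fun q : PrefRel l × Cons l × Cons l => (q.2.1).1) :=
  measurable_subtype_coe.comp (measurable_fst.comp measurable_snd)

lemma meas_xF : Measurable (fun q : PrefRel l × Cons l × Cons l => (q.2.2).1) :=
  measurable_subtype_coe.comp (measurable_snd.comp measurable_snd)

lemma smul_integrable {α : Type*} [MeasurableSpace α] {ν : Measure α}
    (g : α → ℝ) (hg : Measurable g) (hg01 : ∀ q, g q ∈ Set.Icc (0:ℝ) 1)
    {F : α → Fin l → ℝ} (hF : Integrable F ν) :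
    Integrable (fun q => g q • F q) ν := by
  refine hF.norm.mono' (hg.aestronglyMeasurable.smul hF.1) (Filter.Eventually.of_forall fun q => ?_)
  rw [norm_smul]
  refine mul_le_of_le_one_left (norm_nonneg _) ?_
  rw [Real.norm_eq_abs, abs_le]
  exact ⟨by linarith [(hg01 q).1], (hg01 q).2⟩

/-- The key blocking consequence of the core property: any "coalition density" `h`
whose induced net-trade value `∫ h • (e - x)` is nonnegative must have value zero. -/
lemma blocking (μ : Measure (PrefRel l × Cons l)) [IsProbabilityMeasure μ]
    (hμint : Integrable (fun p : PrefRel l × Cons l => (p.2).1) μ)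
    (hmo : μ {p : PrefRel l × Cons l | IsMono p.1} = 1)
    (ν : Measure (PrefRel l × Cons l × Cons l))
    (hν : Realloc μ ν) (hcore : CoreRealloc ν)
    (h : PrefRel l × Cons l × Cons l → ℝ) (hmeas : Measurable h)
    (h01 : ∀ q, h q ∈ Set.Icc (0:ℝ) 1) 
    (hv0 : ∀ i, 0 ≤ (∫ q, h q • ((q.2.1).1 - (q.2.2).1) ∂ν) i) :
    (∫ q : PrefRel l × Cons l × Cons l, h q • ((q.2.1).1 - (q.2.2).1) ∂ν) = 0 := by
  classical
  haveI := hν.1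
  by_contra hne
  set v : Fin l → ℝ := ∫ q : PrefRel l × Cons l × Cons l, h q • ((q.2.1).1 - (q.2.2).1) ∂ν with hv
  -- marginal map
  set m : (PrefRel l × Cons l × Cons l) → PrefRel l × Cons l := fun q => (q.1, q.2.1) with hm
  have hm_meas : Measurable m := measurable_fst.prodMk (measurable_fst.comp measurable_snd)
  have hmap : ν.map m = μ := hν.2.1
  -- integrability of endowment and allocation coordinates
  have he_int : Integrable (fun q : (PrefRel l × Cons l × Cons l) => (q.2.1).1) ν := by
    have := hμint
    rw [← hmap] at this
    exact (integrable_map_measure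
      (by rw [hmap]; exact hμint.1) hm_meas.aemeasurable).mp this
  have hx_int : Integrable (fun q : (PrefRel l × Cons l × Cons l) => (q.2.2).1) ν := hν.2.2.1
  have hφ_int : Integrable (fun q : (PrefRel l × Cons l × Cons l) => (q.2.1).1 - (q.2.2).1) ν := he_int.sub hx_int
  -- the mono set is conull
  have hSmeas : MeasurableSet {p : PrefRel l × Cons l | IsMono p.1} :=
    (measurableSet_isMono l).preimage measurable_fst
  have hmoc : μ {p : PrefRel l × Cons l | IsMono p.1}ᶜ = 0 :=
    (prob_compl_eq_zero_iff hSmeas).mpr hmo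
  have hN : ν {q : (PrefRel l × Cons l × Cons l) | ¬ IsMono q.1} = 0 := by
    have : {q : (PrefRel l × Cons l × Cons l) | ¬ IsMono q.1} = m ⁻¹' {p : PrefRel l × Cons l | IsMono p.1}ᶜ := rfl
    rw [this, ← Measure.map_apply hm_meas hSmeas.compl, hmap]
    exact hmoc
  -- positivity of total coalition mass
  have hh_int : Integrable h ν := by
    refine (integrable_const (1:ℝ)).mono' hmeas.aestronglyMeasurable
      (Filter.Eventually.of_forall fun q => ?_)
    rw [Real.norm_eq_abs, abs_le]
    exact ⟨by linarith [(h01 q).1], by simpa using (h01 q).2⟩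
  have hhne : ¬ (h =ᵐ[ν] 0) := by
    intro hz
    apply hne
    refine integral_eq_zero_of_ae ?_
    filter_upwards [hz] with q hq
    simp only [Pi.zero_apply] at hq
    rw [hq]; simp
  set c : ℝ := ∫ q : (PrefRel l × Cons l × Cons l), h q ∂ν with hc
  have hcpos : 0 < c := by
    rcases lt_or_eq_of_le (integral_nonneg (Pi.le_def.mpr fun q => (h01 q).1 : (0 : PrefRel l × Cons l × Cons l → ℝ) ≤ h)) with h' | h'
    · exact h'
    · exact absurd ((integral_eq_zero_iff_of_nonneg (fun q => (h01 q).1) hh_int).mp h'.symm) hhne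
  set w : Fin l → ℝ := c⁻¹ • v with hwdef
  have hw0 : ∀ i, 0 ≤ w i := fun i =>
    mul_nonneg (inv_nonneg.mpr hcpos.le) (hv0 i)
  have hwne : w ≠ 0 := smul_ne_zero (inv_ne_zero hcpos.ne') hne
  -- the translation map
  set T : Cons l → Cons l := fun x => ⟨x.1 + w, fun i => add_nonneg (x.2 i) (hw0 i)⟩ with hT
  have hTmeas : Measurable T :=
    Measurable.subtype_mk (measurable_subtype_coe.add_const w)
  set f : (PrefRel l × Cons l × Cons l) → PrefRel l × Cons l × Cons l × Cons l :=
    fun q => (q.1, q.2.1, q.2.2, T q.2.2) with hf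
  have hf_meas : Measurable f :=
    measurable_fst.prodMk ((measurable_fst.comp measurable_snd).prodMk
      ((measurable_snd.comp measurable_snd).prodMk
        (hTmeas.comp (measurable_snd.comp measurable_snd))))
  -- the blocking measure
  set dens : (PrefRel l × Cons l × Cons l) → ℝ≥0∞ := fun q => ((h q).toNNReal : ℝ≥0∞) with hdens
  have hdens_meas : Measurable dens := hmeas.real_toNNReal.coe_nnreal_ennreal
  set ρ : Measure (PrefRel l × Cons l × Cons l) := ν.withDensity dens with hρ
  set κ : Measure (PrefRel l × Cons l × Cons l × Cons l) := ρ.map f with hκ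
  -- auxiliary facts about ρ
  have hρ_le : ∀ A : Set (PrefRel l × Cons l × Cons l), MeasurableSet A → ρ A ≤ ν A := by
    intro A hA
    rw [hρ, withDensity_apply _ hA]
    calc ∫⁻ q in A, dens q ∂ν ≤ ∫⁻ _ in A, 1 ∂ν := by
          refine lintegral_mono fun q => ?_
          rw [hdens]
          simp only [ENNReal.coe_le_one_iff]
          exact Real.toNNReal_le_one.mpr (h01 q).2
      _ = ν A := by simp
  have hρ_int : ∀ F : (PrefRel l × Cons l × Cons l) → Fin l → ℝ, Integrable F ν → Integrable F ρ := by
    intro F hF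
    rw [hρ, hdens]
    rw [integrable_withDensity_iff_integrable_smul hmeas.real_toNNReal]
    have : (fun a : (PrefRel l × Cons l × Cons l) => (h a).toNNReal • F a) = fun a => h a • F a := by
      funext a
      rw [NNReal.smul_def, Real.coe_toNNReal _ (h01 a).1]
    rw [this]
    exact smul_integrable h hmeas h01 hF
  have hρ_integral : ∀ F : (PrefRel l × Cons l × Cons l) → Fin l → ℝ,
      (∫ q, F q ∂ρ) = ∫ q, h q • F q ∂ν := by
    intro F
    rw [hρ, hdens]
    have : (∫ q, F q ∂ν.withDensity fun q => ((fun q => (h q).toNNReal) q : ℝ≥0)) =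
        ∫ q, (h q).toNNReal • F q ∂ν :=
      integral_withDensity_eq_integral_smul hmeas.real_toNNReal F
    rw [this]
    congr 1
    funext a
    rw [NNReal.smul_def, Real.coe_toNNReal _ (h01 a).1]
  -- apply the core property
  apply hcore
  refine ⟨κ, ?_, ?_, ?_, ?_, ?_, ?_⟩
  · -- κ ≠ 0
    intro h0
    have : κ Set.univ = 0 := by rw [h0]; simp
    rw [hκ, Measure.map_apply hf_meas MeasurableSet.univ, Set.preimage_univ, hρ,
      withDensity_apply _ MeasurableSet.univ, Measure.restrict_univ] at this
    have hz := (lintegral_eq_zero_iff hdens_meas).mp this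
    apply hhne
    filter_upwards [hz] with q hq
    simp only [Pi.zero_apply] at hq ⊢
    rw [hdens] at hq
    simp only [ENNReal.coe_eq_zero, Real.toNNReal_eq_zero] at hq
    exact le_antisymm hq (h01 q).1
  · -- the preferred set is conull
    have hBmeas : MeasurableSet {q : PrefRel l × Cons l × Cons l × Cons l |
        ¬ q.1.rel q.2.2.2 q.2.2.1} := by
      have : {q : PrefRel l × Cons l × Cons l × Cons l | ¬ q.1.rel q.2.2.2 q.2.2.1} =
          ((fun q : PrefRel l × Cons l × Cons l × Cons l => (q.1, q.2.2.2, q.2.2.1)) ⁻¹'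
            {p : PrefRel l × Cons l × Cons l | p.1.rel p.2.1 p.2.2})ᶜ := rfl
      rw [this]
      refine (MeasurableSet.preimage (measurableSet_relSet l) ?_).compl
      exact measurable_fst.prodMk
        ((measurable_snd.comp (measurable_snd.comp measurable_snd)).prodMk
          (measurable_fst.comp (measurable_snd.comp measurable_snd)))
    rw [hκ, Measure.map_apply hf_meas hBmeas]
    have hsub : f ⁻¹' {q : PrefRel l × Cons l × Cons l × Cons l | ¬ q.1.rel q.2.2.2 q.2.2.1} ⊆
        {q : (PrefRel l × Cons l × Cons l) | ¬ IsMono q.1} := by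
      intro q hq
      intro hmono
      apply hq
      refine hmono (T q.2.2) q.2.2 (fun i => le_add_of_nonneg_right (hw0 i)) ?_
      intro heq
      apply hwne
      have : (T q.2.2).1 = q.2.2.1 := by rw [heq]
      rw [hT] at this
      simpa using congrArg (fun z => z - q.2.2.1) this
    refine le_antisymm ?_ (zero_le)
    calc ρ (f ⁻¹' _) ≤ ρ {q : (PrefRel l × Cons l × Cons l) | ¬ IsMono q.1} := measure_mono hsub
      _ ≤ ν {q : (PrefRel l × Cons l × Cons l) | ¬ IsMono q.1} := by
          refine hρ_le _ ?_
          have : {q : (PrefRel l × Cons l × Cons l) | ¬ IsMono q.1} =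
              (Prod.fst ⁻¹' {r : PrefRel l | IsMono r})ᶜ := rfl
          rw [this]
          exact ((measurableSet_isMono l).preimage measurable_fst).compl
      _ = 0 := hN
  · -- marginal domination
    intro A hA
    have hg3 : Measurable (fun q : PrefRel l × Cons l × Cons l × Cons l =>
        (q.1, q.2.1, q.2.2.1)) :=
      measurable_fst.prodMk ((measurable_fst.comp measurable_snd).prodMk
        (measurable_fst.comp (measurable_snd.comp measurable_snd)))
    rw [hκ, Measure.map_map hg3 hf_meas]
    have : ((fun q : PrefRel l × Cons l × Cons l × Cons l => (q.1, q.2.1, q.2.2.1)) ∘ f) =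
        id := rfl
    rw [this, Measure.map_id]
    exact hρ_le A hA
  · -- integrability of x'
    have hmeas' : Measurable (fun q : PrefRel l × Cons l × Cons l × Cons l => (q.2.2.2).1) :=
      measurable_subtype_coe.comp (measurable_snd.comp (measurable_snd.comp measurable_snd))
    rw [hκ, integrable_map_measure hmeas'.aestronglyMeasurable hf_meas.aemeasurable]
    have : ((fun q : PrefRel l × Cons l × Cons l × Cons l => (q.2.2.2).1) ∘ f) =
        fun q : (PrefRel l × Cons l × Cons l) => (q.2.2).1 + w := rfl
    rw [this]
    exact hρ_int _ (hx_int.add (integrable_const w))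
  · -- integrability of e
    have hmeas' : Measurable (fun q : PrefRel l × Cons l × Cons l × Cons l => (q.2.1).1) :=
      measurable_subtype_coe.comp (measurable_fst.comp measurable_snd)
    rw [hκ, integrable_map_measure hmeas'.aestronglyMeasurable hf_meas.aemeasurable]
    exact hρ_int (fun q : (PrefRel l × Cons l × Cons l) => (q.2.1).1) he_int
  · -- budget balance of the blocking coalition
    have hmeas1 : Measurable (fun q : PrefRel l × Cons l × Cons l × Cons l => (q.2.2.2).1) :=
      measurable_subtype_coe.comp (measurable_snd.comp (measurable_snd.comp measurable_snd))
    have hmeas2 : Measurable (fun q : PrefRel l × Cons l × Cons l × Cons l => (q.2.1).1) :=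
      measurable_subtype_coe.comp (measurable_fst.comp measurable_snd)
    rw [hκ, integral_map hf_meas.aemeasurable hmeas1.aestronglyMeasurable,
      integral_map hf_meas.aemeasurable hmeas2.aestronglyMeasurable]
    have e1 : (∫ q : (PrefRel l × Cons l × Cons l), (f q).2.2.2.1 ∂ρ) = ∫ q : (PrefRel l × Cons l × Cons l), ((q.2.2).1 + w) ∂ρ := rfl
    have e2 : (∫ q : (PrefRel l × Cons l × Cons l), (f q).2.1.1 ∂ρ) = ∫ q : (PrefRel l × Cons l × Cons l), (q.2.1).1 ∂ρ := rfl
    rw [e1, e2, hρ_integral (fun q : (PrefRel l × Cons l × Cons l) => (q.2.2).1 + w), hρ_integral (fun q : (PrefRel l × Cons l × Cons l) => (q.2.1).1)]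
    have e3 : (∫ q : (PrefRel l × Cons l × Cons l), h q • ((q.2.2).1 + w) ∂ν) =
        (∫ q : (PrefRel l × Cons l × Cons l), h q • (q.2.2).1 ∂ν) + (∫ q : (PrefRel l × Cons l × Cons l), h q • w ∂ν) := by
      rw [← integral_add (smul_integrable h hmeas h01 hx_int)
        (smul_integrable h hmeas h01 (integrable_const w))]
      congr 1
      funext q
      rw [smul_add]
    have e4 : (∫ q : (PrefRel l × Cons l × Cons l), h q • w ∂ν) = c • w := integral_smul_const h w
    have e5 : c • w = v := by
      rw [hwdef, smul_smul, mul_inv_cancel₀ hcpos.ne', one_smul]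
    have e6 : v = (∫ q : (PrefRel l × Cons l × Cons l), h q • (q.2.1).1 ∂ν) - ∫ q : (PrefRel l × Cons l × Cons l), h q • (q.2.2).1 ∂ν := by
      rw [hv, ← integral_sub (smul_integrable h hmeas h01 he_int)
        (smul_integrable h hmeas h01 hx_int)]
      congr 1
      funext q
      rw [smul_sub]
    rw [e3, e4, e5, e6]
    abel

end Core17

/-- For a distributional economy concentrated on strictly monotone preferences with
strictly positive aggregate endowment, every core reallocation `ν` admits a strictly
positive price vector `p ≫ 0` with `ν({(≻,e,x) | p·x = p·e}) = 1`. -/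
theorem stmt17 {l : ℕ}
    (μ : Measure (PrefRel l × Cons l)) [IsProbabilityMeasure μ]
    (hμint : Integrable (fun p : PrefRel l × Cons l => (p.2).1) μ)
    (hmo : μ {p : PrefRel l × Cons l | IsMono p.1} = 1)
    (hpos : ∀ i, 0 < (∫ p : PrefRel l × Cons l, (p.2).1 ∂μ) i)
    (ν : Measure (PrefRel l × Cons l × Cons l))
    (hν : Realloc μ ν) (hcore : CoreRealloc ν) :
    ∃ p : Fin l → ℝ, (∀ i, 0 < p i) ∧
      ν {q : PrefRel l × Cons l × Cons l |
        (∑ i, p i * (q.2.2).1 i) = ∑ i, p i * (q.2.1).1 i} = 1 := by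
  classical
  haveI := hν.1
  have hm_meas : Measurable (fun q : PrefRel l × Cons l × Cons l => (q.1, q.2.1)) :=
    measurable_fst.prodMk (measurable_fst.comp measurable_snd)
  have hmap : ν.map (fun q : PrefRel l × Cons l × Cons l => (q.1, q.2.1)) = μ := hν.2.1
  have he_int : Integrable (fun q : PrefRel l × Cons l × Cons l => (q.2.1).1) ν := by
    have h' := hμint
    rw [← hmap] at h'
    exact (integrable_map_measure (by rw [hmap]; exact hμint.1) hm_meas.aemeasurable).mp h'
  have hx_int : Integrable (fun q : PrefRel l × Cons l × Cons l => (q.2.2).1) ν := hν.2.2.1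
  have hφ_int : Integrable (fun q : PrefRel l × Cons l × Cons l =>
      (q.2.1).1 - (q.2.2).1) ν := he_int.sub hx_int
  have hφ_meas : Measurable (fun q : PrefRel l × Cons l × Cons l =>
      (q.2.1).1 - (q.2.2).1) := Core17.meas_eF.sub Core17.meas_xF
  have he_tot : (∫ q : PrefRel l × Cons l × Cons l, (q.2.1).1 ∂ν) =
      ∫ p : PrefRel l × Cons l, (p.2).1 ∂μ := by
    rw [← hmap, integral_map hm_meas.aemeasurable (by rw [hmap]; exact hμint.1)]
  have htot : (∫ q : PrefRel l × Cons l × Cons l, ((q.2.1).1 - (q.2.2).1) ∂ν) = 0 := by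
    rw [integral_sub he_int hx_int, sub_eq_zero, he_tot, hν.2.2.2]
  -- the set of coalition net-trade values
  set KK : Set (Fin l → ℝ) := {u | ∃ h : PrefRel l × Cons l × Cons l → ℝ,
    Measurable h ∧ (∀ q, h q ∈ Set.Icc (0:ℝ) 1) ∧
    u = ∫ q, h q • ((q.2.1).1 - (q.2.2).1) ∂ν} with hKK
  have hKzero : (0 : Fin l → ℝ) ∈ KK :=
    ⟨fun _ => 0, measurable_const, fun q => ⟨le_refl 0, zero_le_one⟩, by simp⟩
  have hKneg : ∀ u ∈ KK, -u ∈ KK := by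
    rintro u ⟨h, hh, h01, rfl⟩
    refine ⟨fun q => 1 - h q, measurable_const.sub hh,
      fun q => ⟨by dsimp only; linarith [(h01 q).2], by dsimp only; linarith [(h01 q).1]⟩, ?_⟩
    have e1 : (fun q : PrefRel l × Cons l × Cons l =>
        (1 - h q) • ((q.2.1).1 - (q.2.2).1)) =
        fun q => ((q.2.1).1 - (q.2.2).1) - h q • ((q.2.1).1 - (q.2.2).1) := by
      funext q; rw [sub_smul, one_smul]
    rw [e1, integral_sub hφ_int (Core17.smul_integrable h hh h01 hφ_int), htot, zero_sub]
  have hKconv : ∀ u₁ ∈ KK, ∀ u₂ ∈ KK, ∀ a b : ℝ, 0 ≤ a → 0 ≤ b → a + b = 1 →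
      a • u₁ + b • u₂ ∈ KK := by
    rintro u₁ ⟨h₁, hh₁, h011, rfl⟩ u₂ ⟨h₂, hh₂, h012, rfl⟩ a b ha hb hab
    refine ⟨fun q => a * h₁ q + b * h₂ q, (hh₁.const_mul a).add (hh₂.const_mul b),
      fun q => ⟨add_nonneg (mul_nonneg ha (h011 q).1) (mul_nonneg hb (h012 q).1), ?_⟩, ?_⟩
    · calc a * h₁ q + b * h₂ q ≤ a * 1 + b * 1 := by
            gcongr
            exacts [(h011 q).2, (h012 q).2]
        _ = 1 := by rw [mul_one, mul_one, hab]
    · have e1 : (fun q : PrefRel l × Cons l × Cons l =>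
          (a * h₁ q + b * h₂ q) • ((q.2.1).1 - (q.2.2).1)) =
          fun q => a • (h₁ q • ((q.2.1).1 - (q.2.2).1)) +
            b • (h₂ q • ((q.2.1).1 - (q.2.2).1)) := by
        funext q; rw [add_smul, smul_smul, smul_smul]
      rw [e1, integral_add
        (show Integrable (fun q : PrefRel l × Cons l × Cons l =>
          a • (h₁ q • ((q.2.1).1 - (q.2.2).1))) ν from
            (Core17.smul_integrable h₁ hh₁ h011 hφ_int).smul a)
        (show Integrable (fun q : PrefRel l × Cons l × Cons l =>
          b • (h₂ q • ((q.2.1).1 - (q.2.2).1))) ν from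
            (Core17.smul_integrable h₂ hh₂ h012 hφ_int).smul b),
        integral_smul, integral_smul]
  have hKpos : ∀ u ∈ KK, (∀ i, 0 ≤ u i) → u = 0 := by
    rintro u ⟨h, hh, h01, rfl⟩ hpos'
    exact Core17.blocking μ hμint hmo ν hν hcore h hh h01 hpos'
  -- the linear span of KK as an explicit submodule
  have hCC_add : ∀ u₁ ∈ {u : Fin l → ℝ | ∃ t : ℝ, 0 ≤ t ∧ ∃ k ∈ KK, u = t • k},
      ∀ u₂ ∈ {u : Fin l → ℝ | ∃ t : ℝ, 0 ≤ t ∧ ∃ k ∈ KK, u = t • k},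
      u₁ + u₂ ∈ {u : Fin l → ℝ | ∃ t : ℝ, 0 ≤ t ∧ ∃ k ∈ KK, u = t • k} := by
    rintro u₁ ⟨t₁, ht₁, k₁, hk₁, rfl⟩ u₂ ⟨t₂, ht₂, k₂, hk₂, rfl⟩
    by_cases hts : t₁ + t₂ = 0
    · have h1 : t₁ = 0 := by linarith
      have h2 : t₂ = 0 := by linarith
      exact ⟨0, le_refl 0, 0, hKzero, by simp [h1, h2]⟩
    · have hts' : 0 < t₁ + t₂ := lt_of_le_of_ne (by linarith) (Ne.symm hts)
      refine ⟨t₁ + t₂, hts'.le, (t₁/(t₁+t₂)) • k₁ + (t₂/(t₁+t₂)) • k₂,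
        hKconv _ hk₁ _ hk₂ _ _ (div_nonneg ht₁ hts'.le) (div_nonneg ht₂ hts'.le)
          (by field_simp), ?_⟩
      rw [smul_add, smul_smul, smul_smul]
      congr 2 <;> field_simp
  set CC : Submodule ℝ (Fin l → ℝ) :=
    { carrier := {u : Fin l → ℝ | ∃ t : ℝ, 0 ≤ t ∧ ∃ k ∈ KK, u = t • k}
      add_mem' := fun h1 h2 => hCC_add _ h1 _ h2
      zero_mem' := ⟨0, le_refl 0, 0, hKzero, by simp⟩
      smul_mem' := by
        rintro c u ⟨t, ht, k, hk, rfl⟩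
        rcases le_total 0 c with hc | hc
        · exact ⟨c*t, mul_nonneg hc ht, k, hk, (smul_smul c t k)⟩
        · refine ⟨(-c)*t, mul_nonneg (neg_nonneg.mpr hc) ht, -k, hKneg k hk, ?_⟩
          rw [smul_neg, ← neg_smul, neg_mul, neg_neg, smul_smul] } with hCCdef
  have hKsubCC : ∀ k ∈ KK, k ∈ CC := fun k hk => ⟨1, zero_le_one, k, hk, (one_smul ℝ k).symm⟩
  -- disjointness from the standard simplex
  have hdisj : Disjoint (CC : Set (Fin l → ℝ)) (stdSimplex ℝ (Fin l)) := by
    rw [Set.disjoint_left]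
    rintro u ⟨t, ht, k, hk, rfl⟩ ⟨hu0, hu1⟩
    rcases eq_or_lt_of_le ht with h0 | hpos'
    · rw [← h0, zero_smul] at hu1
      simp at hu1
    · have hk0 : ∀ i, 0 ≤ k i := by
        intro i
        have := hu0 i
        simp only [Pi.smul_apply, smul_eq_mul] at this
        nlinarith
      have hk' := hKpos k hk hk0
      rw [hk', smul_zero] at hu1
      simp at hu1
  obtain ⟨F, s, t', hFs, hst, hFt⟩ :=
    geometric_hahn_banach_closed_compact CC.convex
      (Submodule.closed_of_finiteDimensional CC)
      (convex_stdSimplex ℝ (Fin l)) (isCompact_stdSimplex ℝ (Fin l)) hdisj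
  have hF0 : ∀ u ∈ CC, F u = 0 := by
    intro u hu
    by_contra hFu
    have h1 : ∀ r : ℝ, F (r • u) < s := fun r => hFs _ (CC.smul_mem r hu)
    have h2 := h1 ((|s| + 1) / F u)
    rw [_root_.map_smul, smul_eq_mul, div_mul_cancel₀ _ hFu] at h2
    have := le_abs_self s
    linarith
  have hs_pos : 0 < s := by
    have := hFs 0 CC.zero_mem
    simpa using this
  -- the price vector
  set χ : Fin l → (Fin l → ℝ) := fun i => fun j => if i = j then (1:ℝ) else 0 with hχ
  have hχmem : ∀ i, χ i ∈ stdSimplex ℝ (Fin l) := by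
    intro i
    constructor
    · intro j
      rw [hχ]
      dsimp only
      split <;> norm_num
    · rw [hχ]
      simp
  set p : Fin l → ℝ := fun i => F (χ i) with hp
  have hppos : ∀ i, 0 < p i := fun i => lt_trans (lt_trans hs_pos hst) (hFt _ (hχmem i))
  have hrepr : ∀ u : Fin l → ℝ, F u = ∑ i, u i * p i := by
    intro u
    conv_lhs => rw [pi_eq_sum_univ u, map_sum]
    refine Finset.sum_congr rfl fun i _ => ?_
    rw [_root_.map_smul, smul_eq_mul, hp]
  -- almost-everywhere budget equality
  have hFφ_int : Integrable (fun q : PrefRel l × Cons l × Cons l =>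
      F ((q.2.1).1 - (q.2.2).1)) ν := F.integrable_comp hφ_int
  have hFφ_meas : Measurable (fun q : PrefRel l × Cons l × Cons l =>
      F ((q.2.1).1 - (q.2.2).1)) := F.continuous.measurable.comp hφ_meas
  have key : ∀ h : PrefRel l × Cons l × Cons l → ℝ, Measurable h →
      (∀ q, h q ∈ Set.Icc (0:ℝ) 1) →
      (∫ q, h q * F ((q.2.1).1 - (q.2.2).1) ∂ν) = 0 := by
    intro h hh h01
    have e1 : (∫ q, h q * F ((q.2.1).1 - (q.2.2).1) ∂ν) =
        F (∫ q, h q • ((q.2.1).1 - (q.2.2).1) ∂ν) := by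
      rw [← ContinuousLinearMap.integral_comp_comm F (Core17.smul_integrable h hh h01 hφ_int)]
      congr 1
      funext q
      rw [_root_.map_smul, smul_eq_mul]
    rw [e1]
    exact hF0 _ (hKsubCC _ ⟨h, hh, h01, rfl⟩)
  have haeles : ∀ᵐ q ∂ν, F ((q.2.1).1 - (q.2.2).1) ≤ 0 := by
    set h : PrefRel l × Cons l × Cons l → ℝ :=
      fun q => if 0 < F ((q.2.1).1 - (q.2.2).1) then 1 else 0 with hdef
    have hh : Measurable h :=
      Measurable.ite (measurableSet_lt measurable_const hFφ_meas) measurable_const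
        measurable_const
    have h01 : ∀ q, h q ∈ Set.Icc (0:ℝ) 1 := by
      intro q; rw [hdef]; dsimp only; split <;> norm_num
    have hnn : ∀ q, 0 ≤ h q * F ((q.2.1).1 - (q.2.2).1) := by
      intro q
      rw [hdef]; dsimp only
      split
      · rename_i hq; rw [one_mul]; exact hq.le
      · rw [zero_mul]
    have hint : Integrable (fun q => h q * F ((q.2.1).1 - (q.2.2).1)) ν := by
      refine hFφ_int.norm.mono' ((hh.mul hFφ_meas).aestronglyMeasurable)
        (Filter.Eventually.of_forall fun q => ?_)
      rw [Real.norm_eq_abs, abs_mul]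
      have h1 : |h q| ≤ 1 := by
        rw [abs_le]; exact ⟨by linarith [(h01 q).1], (h01 q).2⟩
      calc |h q| * |F ((q.2.1).1 - (q.2.2).1)| ≤ 1 * |F ((q.2.1).1 - (q.2.2).1)| := by
            gcongr
        _ = ‖F ((q.2.1).1 - (q.2.2).1)‖ := by rw [one_mul, Real.norm_eq_abs]
    have hz := (integral_eq_zero_iff_of_nonneg hnn hint).mp (key h hh h01)
    filter_upwards [hz] with q hq
    simp only [Pi.zero_apply] at hq
    by_contra hgt
    push_neg at hgt
    rw [hdef] at hq
    simp only [if_pos hgt, one_mul] at hq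
    exact hgt.ne' hq
  have haege : ∀ᵐ q ∂ν, 0 ≤ F ((q.2.1).1 - (q.2.2).1) := by
    set h : PrefRel l × Cons l × Cons l → ℝ :=
      fun q => if F ((q.2.1).1 - (q.2.2).1) < 0 then 1 else 0 with hdef
    have hh : Measurable h :=
      Measurable.ite (measurableSet_lt hFφ_meas measurable_const) measurable_const
        measurable_const
    have h01 : ∀ q, h q ∈ Set.Icc (0:ℝ) 1 := by
      intro q; rw [hdef]; dsimp only; split <;> norm_num
    have hnn : ∀ q, 0 ≤ -(h q * F ((q.2.1).1 - (q.2.2).1)) := by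
      intro q
      rw [hdef]; dsimp only
      split
      · rename_i hq; rw [one_mul]; linarith
      · rw [zero_mul, neg_zero]
    have hint : Integrable (fun q => h q * F ((q.2.1).1 - (q.2.2).1)) ν := by
      refine hFφ_int.norm.mono' ((hh.mul hFφ_meas).aestronglyMeasurable)
        (Filter.Eventually.of_forall fun q => ?_)
      rw [Real.norm_eq_abs, abs_mul]
      have h1 : |h q| ≤ 1 := by
        rw [abs_le]; exact ⟨by linarith [(h01 q).1], (h01 q).2⟩
      calc |h q| * |F ((q.2.1).1 - (q.2.2).1)| ≤ 1 * |F ((q.2.1).1 - (q.2.2).1)| := by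
            gcongr
        _ = ‖F ((q.2.1).1 - (q.2.2).1)‖ := by rw [one_mul, Real.norm_eq_abs]
    have hzero : (∫ q, -(h q * F ((q.2.1).1 - (q.2.2).1)) ∂ν) = 0 := by
      rw [integral_neg, key h hh h01, neg_zero]
    have hz := (integral_eq_zero_iff_of_nonneg hnn hint.neg).mp hzero
    filter_upwards [hz] with q hq
    simp only [Pi.zero_apply] at hq
    by_contra hgt
    push_neg at hgt
    rw [hdef] at hq
    simp only [if_pos hgt, one_mul, neg_eq_zero] at hq
    exact hgt.ne hq
  have hae : ∀ᵐ q ∂ν, F ((q.2.1).1 - (q.2.2).1) = 0 := by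
    filter_upwards [haeles, haege] with q h1 h2
    linarith
  -- conclusion
  refine ⟨p, hppos, ?_⟩
  have hsum_meas : MeasurableSet {q : PrefRel l × Cons l × Cons l |
      (∑ i, p i * (q.2.2).1 i) = ∑ i, p i * (q.2.1).1 i} := by
    refine measurableSet_eq_fun ?_ ?_
    · exact Finset.measurable_sum _ fun i _ =>
        ((measurable_pi_apply i).comp Core17.meas_xF).const_mul (p i)
    · exact Finset.measurable_sum _ fun i _ =>
        ((measurable_pi_apply i).comp Core17.meas_eF).const_mul (p i)
  rw [← prob_compl_eq_zero_iff hsum_meas]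
  have : {q : PrefRel l × Cons l × Cons l |
      (∑ i, p i * (q.2.2).1 i) = ∑ i, p i * (q.2.1).1 i}ᶜ =
      {q : PrefRel l × Cons l × Cons l |
        ¬ ((∑ i, p i * (q.2.2).1 i) = ∑ i, p i * (q.2.1).1 i)} := rfl
  rw [this, ← ae_iff]
  filter_upwards [hae] with q hq
  rw [hrepr] at hq
  have e1 : (∑ i, ((q.2.1).1 - (q.2.2).1) i * p i) =
      (∑ i, p i * (q.2.1).1 i) - ∑ i, p i * (q.2.2).1 i := by
    rw [← Finset.sum_sub_distrib]
    refine Finset.sum_congr rfl fun i _ => ?_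
    simp only [Pi.sub_apply]
    ring
  rw [e1] at hq
  linarith

end
end
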